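/- Let q = 3^h with h odd, and let 𝔽_q be the field with q elements (of characteristic 3). For (x,y) ∈ 𝔽_q², let ℓ_{x,y} be the 2-dimensional subspace of 𝔽_q^4 spanned by (1, 0, −(x+y), x) and (0, 1, x+2y, y), and let ℓ_∞ be the 2-dimensional subspace spanned by (0,0,1,0) and (0,0,0,1). Then 𝒮 = { ℓ_{x,y} : (x,y) ∈ 𝔽_q² } ∪ { ℓ_∞ } is a line spread of PG(3,q), i.e. these q²+1 two-dimensional subspaces pairwise intersect trivially and cover 𝔽_q^4; moreover no member of 𝒮 contains exactly one point of the elliptic quadric defined by F(X₀,X₁,X₂,X₃) = X₀X₁ + X₂² + X₃², so that exactly (q²+1)/2 members of 𝒮 contain exactly two points of this quadric. -/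

import Mathlib

open Module Set

/-- The points of the quadric of `Q`: projective points spanned by singular vectors. -/
def QuadricPoints {F V : Type} [Field F] [AddCommGroup V] [Module F V]
    (Q : V → F) : Set (Submodule F V) :=
  {p | ∃ v : V, v ≠ 0 ∧ Q v = 0 ∧ p = Submodule.span F {v}}

/-- The quadratic form `X₀X₁ + X₂² + X₃²` of the elliptic quadric `Q⁻(3,q)`,
for `q = 3^h` with `h` odd. -/
def ellQuadric (F : Type) [Field F] : (Fin 4 → F) → F :=
  fun v => v 0 * v 1 + v 2 ^ 2 + v 3 ^ 2

/-- The line `ℓ_{x,y}`, spanned by `(1, 0, -(x+y), x)` and `(0, 1, x+2y, y)`. -/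
def lineXY (F : Type) [Field F] (x y : F) : Submodule F (Fin 4 → F) :=
  Submodule.span F {![1, 0, -(x + y), x], ![0, 1, x + 2 * y, y]}

/-- The line `ℓ_∞`, spanned by `(0,0,1,0)` and `(0,0,0,1)`. -/
def lineInf (F : Type) [Field F] : Submodule F (Fin 4 → F) :=
  Submodule.span F {![0, 0, 1, 0], ![0, 0, 0, 1]}

/-- The set of lines `𝒮 = { ℓ_{x,y} : x,y ∈ F } ∪ { ℓ_∞ }`. -/
def spreadS (F : Type) [Field F] : Set (Submodule F (Fin 4 → F)) :=
  {l | ∃ x y : F, l = lineXY F x y} ∪ {lineInf F}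

set_option linter.unusedSectionVars false
set_option linter.unnecessarySeqFocus false
set_option maxHeartbeats 1000000

section Aux
variable {F : Type} [Field F]

lemma mem_lineXY_iff {x y : F} {v : Fin 4 → F} :
    v ∈ lineXY F x y ↔ v 2 = -(v 0)*(x+y) + v 1*(x+2*y) ∧ v 3 = v 0*x + v 1*y := by
  rw [lineXY, Submodule.mem_span_pair]
  constructor
  · rintro ⟨a, b, rfl⟩
    constructor <;> (simp; try ring)
  · rintro ⟨h2, h3⟩
    refine ⟨v 0, v 1, ?_⟩
    funext i
    fin_cases i <;> (simp [h2, h3]; try ring)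

lemma mem_lineInf_iff {v : Fin 4 → F} :
    v ∈ lineInf F ↔ v 0 = 0 ∧ v 1 = 0 := by
  rw [lineInf, Submodule.mem_span_pair]
  constructor
  · rintro ⟨a, b, rfl⟩
    constructor <;> simp
  · rintro ⟨h0, h1⟩
    refine ⟨v 2, v 3, ?_⟩
    funext i
    fin_cases i <;> simp [h0, h1]

lemma sq_add_sq_zero (hns : ¬ IsSquare (-1 : F)) {u v : F} (h : u^2 + v^2 = 0) :
    u = 0 ∧ v = 0 := by
  by_cases hv : v = 0
  · subst hv
    have hu : u ^ 2 = 0 := by linear_combination h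
    exact ⟨by simpa using (pow_eq_zero_iff (two_ne_zero (α := ℕ))).mp hu, rfl⟩
  · exact absurd ⟨u/v, by field_simp; linear_combination -h⟩ hns

lemma lineXY_inf (h3 : (3:F) = 0) (hns : ¬ IsSquare (-1 : F)) {x y x' y' : F}
    (hne : (x, y) ≠ (x', y')) : lineXY F x y ⊓ lineXY F x' y' = ⊥ := by
  rw [Submodule.eq_bot_iff]
  intro v hv
  obtain ⟨hv1, hv2⟩ := Submodule.mem_inf.mp hv
  rw [mem_lineXY_iff] at hv1 hv2
  obtain ⟨a2, a3⟩ := hv1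
  obtain ⟨b2, b3⟩ := hv2
  set u := x - x' with hu
  set w := y - y' with hw
  have huw : u ≠ 0 ∨ w ≠ 0 := by
    by_contra hc
    push_neg at hc
    apply hne
    have hx : x = x' := by linear_combination hc.1
    have hy : y = y' := by linear_combination hc.2
    simp [Prod.ext_iff, hx, hy]
  have e1 : (v 1 - v 0) * u + (2 * v 1 - v 0) * w = 0 := by
    linear_combination b2 - a2
  have e2 : v 0 * u + v 1 * w = 0 := by linear_combination b3 - a3
  have key : (v 0 ^ 2 + v 1 ^ 2 - 3 * (v 0 * v 1)) * u = 0 := by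
    linear_combination v 1 * e1 - (2 * v 1 - v 0) * e2
  have key2 : (v 0 ^ 2 + v 1 ^ 2 - 3 * (v 0 * v 1)) * w = 0 := by
    linear_combination (-(v 0)) * e1 + (v 1 - v 0) * e2
  have hdet : v 0 ^ 2 + v 1 ^ 2 - 3 * (v 0 * v 1) = 0 := by
    rcases huw with hu0 | hw0
    · exact (mul_eq_zero.mp key).resolve_right hu0
    · exact (mul_eq_zero.mp key2).resolve_right hw0
  have hsq : v 0 ^ 2 + v 1 ^ 2 = 0 := by
    linear_combination hdet + (v 0 * v 1) * h3
  obtain ⟨h0, h1⟩ := sq_add_sq_zero hns hsq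
  funext i
  fin_cases i <;> simp [h0, h1, a2, a3]

lemma lineXY_inf_lineInf (x y : F) : lineXY F x y ⊓ lineInf F = ⊥ := by
  rw [Submodule.eq_bot_iff]
  intro v hv
  obtain ⟨hv1, hv2⟩ := Submodule.mem_inf.mp hv
  rw [mem_lineXY_iff] at hv1
  rw [mem_lineInf_iff] at hv2
  obtain ⟨a2, a3⟩ := hv1
  obtain ⟨h0, h1⟩ := hv2
  funext i
  fin_cases i <;> simp [h0, h1, a2, a3]

lemma cover (h3 : (3:F) = 0) (hns : ¬ IsSquare (-1 : F)) (v : Fin 4 → F) :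
    (∃ x y, v ∈ lineXY F x y) ∨ v ∈ lineInf F := by
  by_cases hd : v 0 ^ 2 + v 1 ^ 2 = 0
  · right
    obtain ⟨h0, h1⟩ := sq_add_sq_zero hns hd
    exact mem_lineInf_iff.mpr ⟨h0, h1⟩
  · left
    set Δ := v 0 ^ 2 + v 1 ^ 2 - 3 * (v 0 * v 1) with hΔdef
    have hΔ : Δ ≠ 0 := by
      have : Δ = v 0 ^ 2 + v 1 ^ 2 := by linear_combination (-(v 0 * v 1)) * h3
      rw [this]; exact hd
    refine ⟨(v 1 * v 2 - (2*v 1 - v 0) * v 3)/Δ, ((v 1 - v 0) * v 3 - v 0 * v 2)/Δ, ?_⟩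
    rw [mem_lineXY_iff]
    constructor
    · field_simp
      ring
    · field_simp
      ring

lemma char_three [Fintype F] {q h : ℕ} (hq : q = 3 ^ h) (hcard : Fintype.card F = q) : (3 : F) = 0 := by
  have h1 := Nat.cast_card_eq_zero F
  rw [hcard, hq] at h1
  push_cast at h1
  have hh : h ≠ 0 := by
    rintro rfl
    rw [pow_zero] at h1
    exact one_ne_zero h1
  exact pow_eq_zero_iff hh |>.mp h1

lemma nine_pow_mod (k : ℕ) : (9:ℕ) ^ k % 4 = 1 := by
  induction k with
  | zero => rfl
  | succ n ih => rw [pow_succ]; omega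

lemma neg_one_not_square [Fintype F] {q h : ℕ} (hodd : Odd h) (hq : q = 3 ^ h)
    (hcard : Fintype.card F = q) : ¬ IsSquare (-1 : F) := by
  rw [FiniteField.isSquare_neg_one_iff, hcard, hq]
  intro hc
  apply hc
  obtain ⟨k, rfl⟩ := hodd
  have h9 := nine_pow_mod k
  have h3 : (3:ℕ) ^ (2 * k + 1) = 9 ^ k * 3 := by
    rw [pow_succ, pow_mul]; norm_num
  rw [h3]
  omega

lemma finrank_pair {g1 g2 : Fin 4 → F} (h : LinearIndependent F ![g1, g2]) :
    Module.finrank F (Submodule.span F {g1, g2}) = 2 := by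
  have : ({g1, g2} : Set (Fin 4 → F)) = Set.range ![g1, g2] := by
    simp [Matrix.range_cons, Matrix.range_empty, Set.pair_comm]
  rw [this, finrank_span_eq_card h, Fintype.card_fin]

lemma li_of_coords {g1 g2 : Fin 4 → F} (i j : Fin 4)
    (h11 : g1 i = 1) (h12 : g2 i = 0) (h22 : g2 j = 1) (h21 : g1 j = 0) :
    LinearIndependent F ![g1, g2] := by
  rw [LinearIndependent.pair_iff]
  intro s t hst
  have hi := congrFun hst i
  have hj := congrFun hst j
  simp [h11, h12, h21, h22] at hi hj
  exact ⟨hi, hj⟩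

lemma finrank_lineXY (x y : F) : Module.finrank F (lineXY F x y) = 2 := by
  apply finrank_pair
  apply li_of_coords 0 1 <;> simp

lemma finrank_lineInf : Module.finrank F (lineInf F) = 2 := by
  apply finrank_pair
  apply li_of_coords 2 3 <;> simp

def vecL (x y a b : F) : Fin 4 → F := ![a, b, -a*(x+y) + b*(x+2*y), a*x + b*y]

lemma vecL_mem (x y a b : F) : vecL x y a b ∈ lineXY F x y := by
  rw [mem_lineXY_iff]
  constructor <;> (simp [vecL]; try ring)

lemma vecL_smul (x y a b c : F) : c • vecL x y a b = vecL x y (c*a) (c*b) := by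
  funext i
  fin_cases i <;> (simp [vecL]; try ring)

lemma vecL_eq_zero_iff {x y a b : F} : vecL x y a b = 0 ↔ a = 0 ∧ b = 0 := by
  constructor
  · intro hz
    exact ⟨congrFun hz 0, congrFun hz 1⟩
  · rintro ⟨rfl, rfl⟩
    funext i
    fin_cases i <;> simp [vecL]

lemma eq_vecL {x y : F} {v : Fin 4 → F} (hv : v ∈ lineXY F x y) :
    v = vecL x y (v 0) (v 1) := by
  rw [mem_lineXY_iff] at hv
  funext i
  fin_cases i <;> simp [vecL, hv.1, hv.2]

lemma span_vecL_ne {x y a b a' b' : F} (hb : b = 1) (hb' : b' = 1) (hne : a ≠ a') :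
    Submodule.span F {vecL x y a b} ≠ Submodule.span F {vecL x y a' b'} := by
  subst hb hb'
  intro hEq
  have hmem : vecL x y a' 1 ∈ Submodule.span F {vecL x y a 1} := by
    rw [hEq]; exact Submodule.mem_span_singleton_self _
  obtain ⟨c, hc⟩ := Submodule.mem_span_singleton.mp hmem
  rw [vecL_smul] at hc
  have h1 : c * 1 = 1 := congrFun hc 1
  have h0 : c * a = a' := congrFun hc 0
  simp at h1
  rw [h1, one_mul] at h0
  exact hne h0

lemma mem_sec_iff {l p : Submodule F (Fin 4 → F)} :
    p ∈ QuadricPoints (ellQuadric F) ∩ {p | p ≤ l} ↔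
      ∃ v : Fin 4 → F, v ≠ 0 ∧ ellQuadric F v = 0 ∧ v ∈ l ∧ p = Submodule.span F {v} := by
  constructor
  · rintro ⟨⟨v, hv0, hQ, rfl⟩, hle⟩
    exact ⟨v, hv0, hQ, hle (Submodule.mem_span_singleton_self v), rfl⟩
  · rintro ⟨v, hv0, hQ, hvl, rfl⟩
    exact ⟨⟨v, hv0, hQ, rfl⟩, (Submodule.span_singleton_le_iff_mem v l).mpr hvl⟩

lemma quad_vecL (x y a b : F) :
    ellQuadric F (vecL x y a b) =
      ((x+y)^2 + x^2) * a^2 + (1 - 2*((x+y)*(x+2*y)) + 2*(x*y)) * (a*b)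
        + ((x+2*y)^2 + y^2) * b^2 := by
  simp [ellQuadric, vecL]
  ring

lemma secXY (h3 : (3:F) = 0) (hns : ¬ IsSquare (-1 : F)) (x y : F) :
    (QuadricPoints (ellQuadric F) ∩ {p | p ≤ lineXY F x y} = ∅) ∨
    ∃ p1 p2 : Submodule F (Fin 4 → F), p1 ≠ p2 ∧
      QuadricPoints (ellQuadric F) ∩ {p | p ≤ lineXY F x y} = {p1, p2} := by
  set A : F := (x+y)^2 + x^2 with hAdef
  set B : F := 1 - 2*((x+y)*(x+2*y)) + 2*(x*y) with hBdef
  set Cc : F := (x+2*y)^2 + y^2 with hCdef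
  have hAC : A + Cc = 0 := by
    rw [hAdef, hCdef]; linear_combination (x^2 + 2*x*y + 2*y^2) * h3
  have hD : B^2 + Cc^2 ≠ 0 := by
    intro hD0
    obtain ⟨hB, hC⟩ := sq_add_sq_zero hns hD0
    have hA : A = 0 := by linear_combination hAC - hC
    obtain ⟨hs, hx⟩ := sq_add_sq_zero hns hA
    have : (1:F) = 0 := by
      rw [hBdef] at hB
      linear_combination hB + (2*(x+2*y))*hs + (-2*y)*hx
    exact one_ne_zero this
  have h2 : (2:F) ≠ 0 := by
    intro h2'
    exact one_ne_zero (α := F) (by linear_combination h3 - h2')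
  by_cases hA0 : A = 0
  · -- two points: ⟨g1⟩ and ⟨g2⟩
    have hC0 : Cc = 0 := by linear_combination hAC - hA0
    have hB0 : B ≠ 0 := by
      intro hB'
      apply hD
      rw [hB', hC0]; ring
    right
    refine ⟨Submodule.span F {vecL x y 1 0}, Submodule.span F {vecL x y 0 1}, ?_, ?_⟩
    · intro hEq
      have hmem : vecL x y 0 1 ∈ Submodule.span F {vecL x y 1 0} := by
        rw [hEq]; exact Submodule.mem_span_singleton_self _
      obtain ⟨c, hc⟩ := Submodule.mem_span_singleton.mp hmem
      rw [vecL_smul] at hc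
      have h1 : c * 0 = 1 := congrFun hc 1
      simp at h1
    · ext p
      rw [mem_sec_iff]
      simp only [Set.mem_insert_iff, Set.mem_singleton_iff]
      constructor
      · rintro ⟨v, hv0, hQ, hvl, rfl⟩
        have hveq := eq_vecL hvl
        set a := v 0
        set b := v 1
        rw [hveq, quad_vecL] at hQ
        have hq0 : B * (a*b) = 0 := by
          rw [← hBdef] at hQ
          rw [← hAdef, ← hCdef] at hQ
          linear_combination hQ - a^2 * hA0 - b^2 * hC0
        have hab : a * b = 0 := by
          rcases mul_eq_zero.mp hq0 with h | h
          · exact absurd h hB0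
          · exact h
        rcases mul_eq_zero.mp hab with ha | hb
        · -- a = 0, p = span g2
          right
          have hbne : b ≠ 0 := by
            intro hb
            exact hv0 (by rw [hveq, ha, hb]; exact vecL_eq_zero_iff.mpr ⟨rfl, rfl⟩)
          have : v = b • vecL x y 0 1 := by
            rw [vecL_smul, mul_zero, mul_one, ← ha, hveq]
          rw [this, Submodule.span_singleton_smul_eq (IsUnit.mk0 b hbne)]
        · left
          have hane : a ≠ 0 := by
            intro ha
            exact hv0 (by rw [hveq, ha, hb]; exact vecL_eq_zero_iff.mpr ⟨rfl, rfl⟩)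
          have : v = a • vecL x y 1 0 := by
            rw [vecL_smul, mul_zero, mul_one, ← hb, hveq]
          rw [this, Submodule.span_singleton_smul_eq (IsUnit.mk0 a hane)]
      · rintro (rfl | rfl)
        · refine ⟨vecL x y 1 0, ?_, ?_, vecL_mem x y 1 0, rfl⟩
          · intro hz
            simpa using (vecL_eq_zero_iff.mp hz).1
          · rw [quad_vecL, ← hAdef, ← hBdef, ← hCdef]
            linear_combination hA0
        · refine ⟨vecL x y 0 1, ?_, ?_, vecL_mem x y 0 1, rfl⟩
          · intro hz
            simpa using (vecL_eq_zero_iff.mp hz).2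
          · rw [quad_vecL, ← hAdef, ← hBdef, ← hCdef]
            linear_combination hC0
  · -- A ≠ 0
    set D : F := B^2 - 4*(A*Cc) with hDdef
    have hDD : D = B^2 + Cc^2 := by
      rw [hDdef]
      linear_combination (-3*x^4 - 16*x^3*y - 34*x^2*y^2 - 32*x*y^3 - 15*y^4)*h3
    by_cases hsq : IsSquare D
    · obtain ⟨e, he⟩ := hsq
      have hene : e ≠ 0 := by
        rintro rfl
        apply hD
        rw [← hDD, he, mul_zero]
      have h2A : 2*A ≠ 0 := mul_ne_zero h2 hA0
      have h4 : (4:F) ≠ 0 := by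
        intro h4'
        exact one_ne_zero (α := F) (by linear_combination h4' - h3)
      have h4AA : (4*(A*A) : F) ≠ 0 := mul_ne_zero h4 (mul_ne_zero hA0 hA0)
      set r1 : F := (-B + e)/(2*A) with hr1
      set r2 : F := (-B - e)/(2*A) with hr2
      have he2 : e^2 = D := by rw [he]; ring
      have hquad : ∀ a b : F,
          A*(a - r1*b)*(a - r2*b) = A*a^2 + B*(a*b) + Cc*b^2 := by
        intro a b
        apply mul_left_cancel₀ h4AA
        have e1 : (2*A)*(a - r1*b) = 2*A*a + B*b - e*b := by
          rw [hr1]; field_simp; ring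
        have e2 : (2*A)*(a - r2*b) = 2*A*a + B*b + e*b := by
          rw [hr2]; field_simp; ring
        calc (4*(A*A)) * (A*(a - r1*b)*(a - r2*b))
            = A * (((2*A)*(a - r1*b)) * ((2*A)*(a - r2*b))) := by ring
          _ = A * ((2*A*a + B*b - e*b) * (2*A*a + B*b + e*b)) := by rw [e1, e2]
          _ = A * ((2*A*a + B*b)^2 - e^2*b^2) := by ring
          _ = A * ((2*A*a + B*b)^2 - D*b^2) := by rw [he2]
          _ = (4*(A*A)) * (A*a^2 + B*(a*b) + Cc*b^2) := by rw [hDdef]; ring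
      have hr12 : r1 ≠ r2 := by
        intro hcon
        rw [hr1, hr2, div_eq_div_iff h2A h2A] at hcon
        have h2e : 2*e*(2*A) = 0 := by linear_combination hcon
        rcases mul_eq_zero.mp h2e with hh | hh
        · rcases mul_eq_zero.mp hh with hh | hh
          · exact h2 hh
          · exact hene hh
        · exact h2A hh
      right
      refine ⟨Submodule.span F {vecL x y r1 1}, Submodule.span F {vecL x y r2 1},
        span_vecL_ne rfl rfl hr12, ?_⟩
      ext p
      rw [mem_sec_iff]
      simp only [Set.mem_insert_iff, Set.mem_singleton_iff]
      constructor
      · rintro ⟨v, hv0, hQ, hvl, rfl⟩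
        have hveq := eq_vecL hvl
        set a := v 0
        set b := v 1
        rw [hveq, quad_vecL, ← hAdef, ← hBdef, ← hCdef] at hQ
        have hbne : b ≠ 0 := by
          intro hb
          rw [hb] at hQ
          have ha2 : a^2 = 0 := by
            have := mul_eq_zero.mp (show A * a^2 = 0 by linear_combination hQ)
            tauto
          have ha : a = 0 := by
            simpa using (pow_eq_zero_iff (two_ne_zero (α := ℕ))).mp ha2
          exact hv0 (by rw [hveq, ha, hb]; exact vecL_eq_zero_iff.mpr ⟨rfl, rfl⟩)
        have hzero : A*(a - r1*b)*(a - r2*b) = 0 := by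
          rw [hquad a b]; exact hQ
        have hcases : a = r1*b ∨ a = r2*b := by
          rcases mul_eq_zero.mp hzero with hh | hh
          · rcases mul_eq_zero.mp hh with hh | hh
            · exact absurd hh hA0
            · left; linear_combination hh
          · right; linear_combination hh
        rcases hcases with hab | hab
        · left
          have hvb : v = b • vecL x y r1 1 := by
            rw [vecL_smul, mul_one, hveq, hab, mul_comm]
          rw [hvb, Submodule.span_singleton_smul_eq (IsUnit.mk0 b hbne)]
        · right
          have hvb : v = b • vecL x y r2 1 := by
            rw [vecL_smul, mul_one, hveq, hab, mul_comm]
          rw [hvb, Submodule.span_singleton_smul_eq (IsUnit.mk0 b hbne)]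
      · rintro (rfl | rfl)
        · refine ⟨vecL x y r1 1, ?_, ?_, vecL_mem x y r1 1, rfl⟩
          · intro hz
            simpa using (vecL_eq_zero_iff.mp hz).2
          · rw [quad_vecL, ← hAdef, ← hBdef, ← hCdef]
            have hq1 := hquad r1 1
            linear_combination -hq1
        · refine ⟨vecL x y r2 1, ?_, ?_, vecL_mem x y r2 1, rfl⟩
          · intro hz
            simpa using (vecL_eq_zero_iff.mp hz).2
          · rw [quad_vecL, ← hAdef, ← hBdef, ← hCdef]
            have hq2 := hquad r2 1
            linear_combination -hq2
    · left
      ext p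
      simp only [Set.mem_empty_iff_false, iff_false]
      rw [mem_sec_iff]
      rintro ⟨v, hv0, hQ, hvl, rfl⟩
      have hveq := eq_vecL hvl
      set a := v 0
      set b := v 1
      rw [hveq, quad_vecL, ← hAdef, ← hBdef, ← hCdef] at hQ
      have hbne : b ≠ 0 := by
        intro hb
        rw [hb] at hQ
        have ha2 : a^2 = 0 := by
          have := mul_eq_zero.mp (show A * a^2 = 0 by linear_combination hQ)
          tauto
        have ha : a = 0 := by
          simpa using (pow_eq_zero_iff (two_ne_zero (α := ℕ))).mp ha2
        exact hv0 (by rw [hveq, ha, hb]; exact vecL_eq_zero_iff.mpr ⟨rfl, rfl⟩)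
      apply hsq
      refine ⟨(2*A*a + B*b)/b, ?_⟩
      have key : D * b^2 = (2*A*a + B*b)^2 := by
        rw [hDdef]; linear_combination (-4*A)*hQ
      field_simp
      linear_combination key

lemma secInf (hns : ¬ IsSquare (-1 : F)) :
    QuadricPoints (ellQuadric F) ∩ {p | p ≤ lineInf F} = ∅ := by
  ext p
  simp only [Set.mem_empty_iff_false, iff_false]
  rw [mem_sec_iff]
  rintro ⟨v, hv0, hQ, hvl, rfl⟩
  rw [mem_lineInf_iff] at hvl
  obtain ⟨h0, h1⟩ := hvl
  have hq : v 2 ^ 2 + v 3 ^ 2 = 0 := by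
    have : ellQuadric F v = v 0 * v 1 + v 2 ^2 + v 3^2 := rfl
    rw [this] at hQ
    linear_combination hQ - v 1 * h0
  obtain ⟨h2, h3⟩ := sq_add_sq_zero hns hq
  apply hv0
  funext i
  fin_cases i <;> simp [h0, h1, h2, h3]

/-- parametrizing vector of a quadric point -/

def Wv (c d : F) : Fin 4 → F := ![1, -(c^2+d^2), c, d]

def Ev : Fin 4 → F := ![0, 1, 0, 0]

lemma quadric_points_eq (hns : ¬ IsSquare (-1 : F)) :
    QuadricPoints (ellQuadric F) =
      insert (Submodule.span F {(Ev : Fin 4 → F)})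
        (Set.range fun p : F × F => Submodule.span F {Wv p.1 p.2}) := by
  ext P
  constructor
  · rintro ⟨v, hv0, hQ, rfl⟩
    have hQ' : v 0 * v 1 + v 2 ^2 + v 3^2 = 0 := hQ
    by_cases h0 : v 0 = 0
    · left
      have hsq : v 2 ^2 + v 3^2 = 0 := by linear_combination hQ' - v 1 * h0
      obtain ⟨h2, h3⟩ := sq_add_sq_zero hns hsq
      have h1 : v 1 ≠ 0 := by
        intro h1
        exact hv0 (by funext i; fin_cases i <;> simp [h0, h1, h2, h3])
      have hveq : v = v 1 • Ev := by
        funext i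
        fin_cases i <;> simp [Ev, h0, h2, h3]
      rw [hveq, Submodule.span_singleton_smul_eq (IsUnit.mk0 _ h1)]
    · right
      have hveq : v = v 0 • Wv (v 2 / v 0) (v 3 / v 0) := by
        funext i
        fin_cases i <;> (simp [Wv]; try field_simp)
        · linear_combination hQ'
      have hspan : Submodule.span F {v} =
          Submodule.span F {Wv (v 2 / v 0) (v 3 / v 0)} := by
        conv_lhs => rw [hveq]
        exact Submodule.span_singleton_smul_eq (IsUnit.mk0 _ h0) _
      exact ⟨(v 2 / v 0, v 3 / v 0), hspan.symm⟩
  · rintro (rfl | ⟨⟨c, d⟩, rfl⟩)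
    · refine ⟨Ev, ?_, ?_, rfl⟩
      · intro hz
        have := congrFun hz 1
        simp [Ev] at this
      · show (0:F) * 1 + 0^2 + 0^2 = 0
        ring
    · refine ⟨Wv c d, ?_, ?_, rfl⟩
      · intro hz
        have := congrFun hz 0
        simp [Wv] at this
      · show (1:F) * (-(c^2+d^2)) + c^2 + d^2 = 0
        ring

lemma Wv_inj : Function.Injective (fun p : F × F => Submodule.span F {Wv p.1 p.2}) := by
  rintro ⟨c, d⟩ ⟨c', d'⟩ hEq
  simp only at hEq
  have hmem : Wv c' d' ∈ Submodule.span F {Wv c d} := by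
    rw [hEq]; exact Submodule.mem_span_singleton_self _
  obtain ⟨t, ht⟩ := Submodule.mem_span_singleton.mp hmem
  have h0 : t * 1 = 1 := by
    have := congrFun ht 0
    simpa [Wv] using this
  have h2 : t * c = c' := by
    have := congrFun ht 2
    simpa [Wv] using this
  have h3 : t * d = d' := by
    have := congrFun ht 3
    simpa [Wv] using this
  rw [mul_one] at h0
  subst h0
  rw [one_mul] at h2 h3
  simp [Prod.ext_iff, h2, h3]

lemma Ev_notmem_range :
    Submodule.span F {(Ev : Fin 4 → F)} ∉
      Set.range fun p : F × F => Submodule.span F {Wv p.1 p.2} := by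
  rintro ⟨⟨c, d⟩, hEq⟩
  simp only at hEq
  have hmem : Wv c d ∈ Submodule.span F {(Ev : Fin 4 → F)} := by
    rw [← hEq]; exact Submodule.mem_span_singleton_self _
  obtain ⟨t, ht⟩ := Submodule.mem_span_singleton.mp hmem
  have h0 := congrFun ht 0
  simp [Wv, Ev] at h0

lemma ncard_quadric_points [Fintype F] (hns : ¬ IsSquare (-1 : F)) :
    (QuadricPoints (ellQuadric F)).ncard = Fintype.card F ^ 2 + 1 := by
  rw [quadric_points_eq hns]
  have : Finite (Submodule F (Fin 4 → F)) := by infer_instance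
  rw [Set.ncard_insert_of_notMem Ev_notmem_range (Set.toFinite _)]
  rw [← Set.image_univ, Set.ncard_image_of_injective _ Wv_inj]
  rw [Set.ncard_univ, Nat.card_eq_fintype_card, Fintype.card_prod]
  ring

end Aux

section Main
variable {F : Type} [Field F] [Fintype F]

lemma lineXY_injective {x y x' y' : F} (h : lineXY F x y = lineXY F x' y') :
    x = x' ∧ y = y' := by
  have hmem : (![1, 0, -(x + y), x] : Fin 4 → F) ∈ lineXY F x' y' := by
    rw [← h, mem_lineXY_iff]
    constructor <;> (simp; try ring)
  rw [mem_lineXY_iff] at hmem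
  simp at hmem
  obtain ⟨h2, h3⟩ := hmem
  constructor
  · linear_combination h3
  · linear_combination -h2 - h3

lemma lineInf_ne_lineXY (x y : F) : lineInf F ≠ lineXY F x y := by
  intro hEq
  have hmem : (![0, 0, 1, 0] : Fin 4 → F) ∈ lineXY F x y := by
    rw [← hEq, mem_lineInf_iff]
    simp
  rw [mem_lineXY_iff] at hmem
  simp at hmem

lemma spreadS_eq : spreadS F =
    insert (lineInf F) (Set.range fun p : F × F => lineXY F p.1 p.2) := by
  ext l
  constructor
  · rintro (⟨x, y, rfl⟩ | hl)
    · exact Set.mem_insert_of_mem _ ⟨(x, y), rfl⟩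
    · rw [Set.mem_singleton_iff] at hl
      rw [hl]
      exact Set.mem_insert _ _
  · rintro (rfl | ⟨⟨x, y⟩, rfl⟩)
    · exact Or.inr rfl
    · exact Or.inl ⟨x, y, rfl⟩

lemma lineXY_fn_injective :
    Function.Injective (fun p : F × F => lineXY F p.1 p.2) := by
  rintro ⟨x, y⟩ ⟨x', y'⟩ hEq
  obtain ⟨hx, hy⟩ := lineXY_injective hEq
  exact Prod.ext_iff.mpr ⟨hx, hy⟩

lemma ncard_spreadS : (spreadS F).ncard = Fintype.card F ^ 2 + 1 := by
  rw [spreadS_eq]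
  have hnm : lineInf F ∉ Set.range fun p : F × F => lineXY F p.1 p.2 := by
    rintro ⟨⟨x, y⟩, hEq⟩
    exact lineInf_ne_lineXY x y hEq.symm
  rw [Set.ncard_insert_of_notMem hnm (Set.toFinite _)]
  rw [← Set.image_univ, Set.ncard_image_of_injective _ lineXY_fn_injective]
  rw [Set.ncard_univ, Nat.card_eq_fintype_card, Fintype.card_prod]
  ring

lemma spread_disjoint (h3 : (3:F) = 0) (hns : ¬ IsSquare (-1 : F)) :
    ∀ l₁ ∈ spreadS F, ∀ l₂ ∈ spreadS F, l₁ ≠ l₂ → l₁ ⊓ l₂ = ⊥ := by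
  rintro l₁ (⟨x, y, rfl⟩ | h₁) l₂ (⟨x', y', rfl⟩ | h₂) hne
  · refine lineXY_inf h3 hns fun hEq => hne ?_
    have h1 : x = x' := congrArg Prod.fst hEq
    have h2 : y = y' := congrArg Prod.snd hEq
    rw [h1, h2]
  · rw [Set.mem_singleton_iff] at h₂
    rw [h₂]
    exact lineXY_inf_lineInf x y
  · rw [Set.mem_singleton_iff] at h₁
    rw [h₁, inf_comm]
    exact lineXY_inf_lineInf x' y'
  · rw [Set.mem_singleton_iff] at h₁ h₂
    exact absurd (h₁.trans h₂.symm) hne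

lemma spread_cover (h3 : (3:F) = 0) (hns : ¬ IsSquare (-1 : F)) :
    ∀ v : Fin 4 → F, ∃ l ∈ spreadS F, v ∈ l := by
  intro v
  rcases cover h3 hns v with ⟨x, y, hv⟩ | hv
  · exact ⟨lineXY F x y, Or.inl ⟨x, y, rfl⟩, hv⟩
  · exact ⟨lineInf F, Or.inr rfl, hv⟩

lemma spread_dichotomy (h3 : (3:F) = 0) (hns : ¬ IsSquare (-1 : F)) :
    ∀ l ∈ spreadS F,
      (QuadricPoints (ellQuadric F) ∩ {p | p ≤ l} = ∅) ∨
      ∃ p1 p2 : Submodule F (Fin 4 → F), p1 ≠ p2 ∧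
        QuadricPoints (ellQuadric F) ∩ {p | p ≤ l} = {p1, p2} := by
  rintro l (⟨x, y, rfl⟩ | hl)
  · exact secXY h3 hns x y
  · rw [Set.mem_singleton_iff] at hl
    rw [hl]
    exact Or.inl (secInf hns)


/-- points of the quadric on the line `l`. -/
def SecSet (F : Type) [Field F] (l : Submodule F (Fin 4 → F)) :
    Set (Submodule F (Fin 4 → F)) :=
  QuadricPoints (ellQuadric F) ∩ {p | p ≤ l}

lemma two_secant_ncard (h3 : (3:F) = 0) (hns : ¬ IsSquare (-1 : F)) :
    2 * {l ∈ spreadS F | (SecSet F l).ncard = 2}.ncard = Fintype.card F ^ 2 + 1 := by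
  classical
  have hdicho := spread_dichotomy h3 hns
  have hdisj := spread_disjoint h3 hns
  have hPne : ∀ P ∈ QuadricPoints (ellQuadric F), P ≠ (⊥ : Submodule F (Fin 4 → F)) := by
    rintro P ⟨v, hv0, hQ, rfl⟩ hbot
    exact hv0 (Submodule.span_singleton_eq_bot.mp hbot)
  have huniq : ∀ P ∈ QuadricPoints (ellQuadric F), ∀ l₁ ∈ spreadS F, ∀ l₂ ∈ spreadS F,
      P ∈ SecSet F l₁ → P ∈ SecSet F l₂ → l₁ = l₂ := by
    intro P hP l₁ hl₁ l₂ hl₂ hP1 hP2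
    by_contra hne
    have hb := hdisj l₁ hl₁ l₂ hl₂ hne
    have hle : P ≤ l₁ ⊓ l₂ := le_inf hP1.2 hP2.2
    rw [hb, le_bot_iff] at hle
    exact hPne P hP hle
  have hmem_line : ∀ P ∈ QuadricPoints (ellQuadric F), ∃ l ∈ spreadS F, P ∈ SecSet F l := by
    rintro P hP
    obtain ⟨v, hv0, hQ, rfl⟩ := hP
    obtain ⟨l, hl, hvl⟩ := spread_cover h3 hns v
    exact ⟨l, hl, ⟨⟨v, hv0, hQ, rfl⟩, (Submodule.span_singleton_le_iff_mem v l).mpr hvl⟩⟩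
  set S2 : Set (Submodule F (Fin 4 → F)) :=
    {l ∈ spreadS F | (SecSet F l).ncard = 2} with hS2
  have hunion : QuadricPoints (ellQuadric F) = ⋃ l ∈ S2, SecSet F l := by
    ext P
    constructor
    · intro hP
      obtain ⟨l, hl, hPl⟩ := hmem_line P hP
      have hl2 : l ∈ S2 := by
        refine ⟨hl, ?_⟩
        rcases hdicho l hl with hemp | ⟨p1, p2, hne, hpair⟩
        · rw [show SecSet F l = QuadricPoints (ellQuadric F) ∩ {p | p ≤ l} from rfl,
            hemp] at hPl
          exact absurd hPl (Set.notMem_empty P)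
        · rw [show SecSet F l = QuadricPoints (ellQuadric F) ∩ {p | p ≤ l} from rfl,
            hpair, Set.ncard_pair hne]
      exact Set.mem_biUnion hl2 hPl
    · intro hP
      obtain ⟨l, hl, hPl⟩ := Set.mem_iUnion₂.mp hP
      exact hPl.1
  have hfinQ : (QuadricPoints (ellQuadric F)).Finite := Set.toFinite _
  have hfinS2 : S2.Finite := Set.toFinite _
  have hfeq : hfinQ.toFinset =
      hfinS2.toFinset.biUnion (fun l => (SecSet F l).toFinite.toFinset) := by
    ext P
    simp only [Set.Finite.mem_toFinset, Finset.mem_biUnion]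
    rw [hunion]
    constructor
    · intro hP
      obtain ⟨l, hl, hPl⟩ := Set.mem_iUnion₂.mp hP
      exact ⟨l, hl, hPl⟩
    · rintro ⟨l, hl, hPl⟩
      exact Set.mem_biUnion hl hPl
  have hdisjF : ∀ l₁ ∈ hfinS2.toFinset, ∀ l₂ ∈ hfinS2.toFinset, l₁ ≠ l₂ →
      Disjoint ((SecSet F l₁).toFinite.toFinset) ((SecSet F l₂).toFinite.toFinset) := by
    intro l₁ hl₁ l₂ hl₂ hne
    rw [Set.Finite.mem_toFinset] at hl₁ hl₂
    rw [Finset.disjoint_left]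
    intro P hP1 hP2
    rw [Set.Finite.mem_toFinset] at hP1 hP2
    exact hne (huniq P hP1.1 l₁ hl₁.1 l₂ hl₂.1 hP1 hP2)
  have hcount : (QuadricPoints (ellQuadric F)).ncard = 2 * S2.ncard := by
    rw [Set.ncard_eq_toFinset_card _ hfinQ, hfeq, Finset.card_biUnion hdisjF]
    rw [Set.ncard_eq_toFinset_card _ hfinS2]
    rw [Finset.sum_congr rfl (fun l hl => ?_), Finset.sum_const, smul_eq_mul, mul_comm]
    rw [← Set.ncard_eq_toFinset_card _ ((SecSet F l).toFinite)]
    exact ((Set.Finite.mem_toFinset _).mp hl).2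
  rw [← hcount, ncard_quadric_points hns]

theorem spreadS_is_spread_without_tangents
    {q h : ℕ} (hodd : Odd h) (hq : q = 3 ^ h)
    {F : Type} [Field F] [Fintype F] (hcard : Fintype.card F = q) :
    (spreadS F).ncard = q ^ 2 + 1 ∧
    (∀ l ∈ spreadS F, Module.finrank F l = 2) ∧
    (∀ l₁ ∈ spreadS F, ∀ l₂ ∈ spreadS F, l₁ ≠ l₂ → l₁ ⊓ l₂ = ⊥) ∧
    (∀ v : Fin 4 → F, ∃ l ∈ spreadS F, v ∈ l) ∧
    (∀ l ∈ spreadS F, (QuadricPoints (ellQuadric F) ∩ {p | p ≤ l}).ncard ≠ 1) ∧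
    {l ∈ spreadS F | (QuadricPoints (ellQuadric F) ∩ {p | p ≤ l}).ncard = 2}.ncard
      = (q ^ 2 + 1) / 2 := by
  classical
  have h3 : (3:F) = 0 := char_three hq hcard
  have hns : ¬ IsSquare (-1 : F) := neg_one_not_square hodd hq hcard
  have hdicho := spread_dichotomy h3 hns
  have hdisj := spread_disjoint h3 hns
  refine ⟨by rw [ncard_spreadS, hcard], ?_, hdisj, spread_cover h3 hns, ?_, ?_⟩
  · rintro l (⟨x, y, rfl⟩ | hl)
    · exact finrank_lineXY x y
    · rw [Set.mem_singleton_iff] at hl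
      rw [hl]
      exact finrank_lineInf
  · -- no tangents
    intro l hl
    rcases hdicho l hl with hemp | ⟨p1, p2, hne, hpair⟩
    · rw [hemp]
      simp
    · rw [hpair, Set.ncard_pair hne]
      omega
  · -- counting 2-secants
    show {l ∈ spreadS F | (SecSet F l).ncard = 2}.ncard = (q ^ 2 + 1) / 2
    have hcount := two_secant_ncard h3 hns (F := F)
    rw [hcard] at hcount
    have hqodd : Odd q := by
      rw [hq]
      exact Odd.pow ⟨1, by norm_num⟩
    have hmodd : Odd (q ^ 2) := hqodd.pow
    obtain ⟨m, hm⟩ : ∃ m, q ^ 2 = m := ⟨_, rfl⟩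
    rw [hm] at hcount ⊢
    obtain ⟨k, hk⟩ := hm ▸ hmodd
    omega

end Main
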